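/- (Generalized product difference identity) For all natural numbers n, u, v: G(n+u)·G(n+v) − G(n+u+v)·G n = (−b)^n·(H₁ − H₀·α)·(H₁ − H₀·β)·(h u)·(h v) + p·d^(n+u+v)·( G(n+u)·d^(−u) + G(n+v)·d^(−v) − G(n+u+v)·d^(−u−v) − G n ). -/

import Mathlib

set_option maxHeartbeats 1600000


theorem stmt_3 (a b c d : ℝ) (ha : 0 < a) (hb : 0 < b) (hc : 0 ≤ c) (hd : 0 < d)
    (hden : d^2 - a*d - b ≠ 0)
    (α β p : ℝ)
    (hα : α = (a + Real.sqrt (a^2 + 4*b)) / 2)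
    (hβ : β = (a - Real.sqrt (a^2 + 4*b)) / 2)
    (hp : p = c * d^2 / (d^2 - a*d - b))
    (G : ℕ → ℝ)
    (hG : ∀ n : ℕ, 2 ≤ n → G n = a * G (n-1) + b * G (n-2) + c * d^n)
    (H0 H1 : ℝ) (hH0 : H0 = G 0 - p) (hH1 : H1 = G 1 - p*d)
    (h : ℕ → ℝ) (hh0 : h 0 = 0) (hh1 : h 1 = 1)
    (hhrec : ∀ n : ℕ, 2 ≤ n → h n = a * h (n-1) + b * h (n-2)) :
    ∀ n u v : ℕ,
      G (n+u) * G (n+v) - G (n+u+v) * G n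
        = (-b)^n * (H1 - H0*α) * (H1 - H0*β) * h u * h v
          + p * d^(n+u+v) *
            (G (n+u) * d^(-(u:ℤ)) + G (n+v) * d^(-(v:ℤ))
              - G (n+u+v) * d^(-(u:ℤ)-(v:ℤ)) - G n) := by
  have hdisc : (0:ℝ) < a^2 + 4*b := by positivity
  have hs2 : (Real.sqrt (a^2+4*b))^2 = a^2+4*b := Real.sq_sqrt hdisc.le
  have hspos : 0 < Real.sqrt (a^2+4*b) := Real.sqrt_pos.mpr hdisc
  set s := Real.sqrt (a^2+4*b) with hs
  have hsne : s ≠ 0 := ne_of_gt hspos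
  have hsum : α + β = a := by rw [hα, hβ]; ring
  have hmul : α * β = -b := by
    rw [hα, hβ]
    have : (a + s)/2 * ((a - s)/2) = (a^2 - s^2)/4 := by ring
    rw [this, hs2]; ring
  have hdiff : α - β = s := by rw [hα, hβ]; ring
  have hα2 : α^2 = a*α + b := by
    have : α^2 - a*α - b = α^2 - (α+β)*α + α*β := by rw [hsum, hmul]; ring
    nlinarith [this]
  have hβ2 : β^2 = a*β + b := by
    have : β^2 - a*β - b = β^2 - (α+β)*β + α*β := by rw [hsum, hmul]; ring
    nlinarith [this]
  set A := (H1 - H0*β)/s with hA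
  set B := (H0*α - H1)/s with hB
  have hAB : A + B = H0 := by
    rw [hA, hB]; field_simp; linear_combination H0 * hdiff
  have hAB1 : A*α + B*β = H1 := by
    rw [hA, hB]; field_simp; linear_combination H1 * hdiff
  have hpd : p * (d^2 - a*d - b) = c * d^2 := by
    rw [hp]; exact div_mul_cancel₀ _ hden
  -- closed form for G
  have hGcf : ∀ n : ℕ, G n = A * α^n + B * β^n + p * d^n := by
    have key : ∀ n : ℕ, (G n = A * α^n + B * β^n + p * d^n) ∧
        (G (n+1) = A * α^(n+1) + B * β^(n+1) + p * d^(n+1)) := by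
      intro n
      induction n with
      | zero =>
        constructor
        · simp only [pow_zero, pow_one, mul_one]
          have : A + B = G 0 - p := by rw [hAB, hH0]
          linarith [this]
        · have : A*α + B*β = G 1 - p*d := by rw [hAB1, hH1]
          norm_num
          linarith [this]
      | succ n ih =>
        refine ⟨ih.2, ?_⟩
        have h2 : G (n+2) = a * G (n+1) + b * G n + c * d^(n+2) := by
          have := hG (n+2) (by omega)
          exact this
        rw [h2, ih.1, ih.2]
        have e1 : α^(n+2) = α^n * (a*α + b) := by rw [← hα2]; ring
        have e2 : β^(n+2) = β^n * (a*β + b) := by rw [← hβ2]; ring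
        have e3 : c * d^(n+2) = p * d^n * (d^2 - a*d - b) := by
          have : p * d^n * (d^2 - a*d - b) = (p * (d^2 - a*d - b)) * d^n := by ring
          rw [this, hpd]; ring
        rw [e1, e2, e3]; ring
    exact fun n => (key n).1
  -- closed form for h
  have hhcf : ∀ n : ℕ, h n = (α^n - β^n)/s := by
    have key : ∀ n : ℕ, (h n = (α^n - β^n)/s) ∧
        (h (n+1) = (α^(n+1) - β^(n+1))/s) := by
      intro n
      induction n with
      | zero =>
        constructor
        · simp [hh0]
        · simp only [pow_one, zero_add, hh1]
          rw [hdiff]; field_simp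
      | succ n ih =>
        refine ⟨ih.2, ?_⟩
        have h2 : h (n+2) = a * h (n+1) + b * h n := by
          have := hhrec (n+2) (by omega)
          exact this
        rw [h2, ih.1, ih.2]
        have e1 : α^(n+2) = α^n * (a*α + b) := by rw [← hα2]; ring
        have e2 : β^(n+2) = β^n * (a*β + b) := by rw [← hβ2]; ring
        rw [e1, e2]; field_simp; ring
    exact fun n => (key n).1
  intro n u v
  have hdne : d ≠ 0 := ne_of_gt hd
  have hdu : (d:ℝ)^u ≠ 0 := pow_ne_zero _ hdne
  have hdv : (d:ℝ)^v ≠ 0 := pow_ne_zero _ hdne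
  have hABs : (H1 - H0*α) * (H1 - H0*β) = -(A*B) * s^2 := by
    rw [hA, hB]; field_simp; ring
  have hprod : (H1 - H0*α) * (H1 - H0*β) * h u * h v
      = -(A*B) * ((α^u - β^u) * (α^v - β^v)) := by
    rw [hhcf u, hhcf v, hABs]; field_simp
  have e1 : (d:ℝ)^(n+u+v) * d^(-(u:ℤ)) = d^(n+v) := by
    rw [zpow_neg, zpow_natCast, show n+u+v = (n+v)+u by omega, pow_add,
      mul_assoc, mul_inv_cancel₀ hdu, mul_one]
  have e2 : (d:ℝ)^(n+u+v) * d^(-(v:ℤ)) = d^(n+u) := by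
    rw [zpow_neg, zpow_natCast, show n+u+v = (n+u)+v by omega, pow_add,
      mul_assoc, mul_inv_cancel₀ hdv, mul_one]
  have e3 : (d:ℝ)^(n+u+v) * d^(-(u:ℤ)-(v:ℤ)) = d^n := by
    have : (-(u:ℤ)-(v:ℤ)) = -((u+v : ℕ) : ℤ) := by push_cast; ring
    rw [this, zpow_neg, zpow_natCast, show n+u+v = n+(u+v) by omega, pow_add,
      mul_assoc, mul_inv_cancel₀ (pow_ne_zero _ hdne), mul_one]
  have hrhs : p * d^(n+u+v) *
      (G (n+u) * d^(-(u:ℤ)) + G (n+v) * d^(-(v:ℤ))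
        - G (n+u+v) * d^(-(u:ℤ)-(v:ℤ)) - G n)
    = p * (d^(n+v) * G (n+u) + d^(n+u) * G (n+v)
        - d^n * G (n+u+v) - d^(n+u+v) * G n) := by
    have := e1; have := e2; have := e3
    calc p * d^(n+u+v) * (G (n+u) * d^(-(u:ℤ)) + G (n+v) * d^(-(v:ℤ))
        - G (n+u+v) * d^(-(u:ℤ)-(v:ℤ)) - G n)
        = p * ((d^(n+u+v) * d^(-(u:ℤ))) * G (n+u)
            + (d^(n+u+v) * d^(-(v:ℤ))) * G (n+v)
            - (d^(n+u+v) * d^(-(u:ℤ)-(v:ℤ))) * G (n+u+v)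
            - d^(n+u+v) * G n) := by ring
      _ = _ := by rw [e1, e2, e3]
  rw [hrhs]
  have hnb : (-b)^n * (H1 - H0*α) * (H1 - H0*β) * h u * h v
      = (α^n * β^n) * (-(A*B) * ((α^u - β^u) * (α^v - β^v))) := by
    rw [← hmul, mul_pow]
    linear_combination (α^n * β^n) * hprod
  rw [hnb, hGcf (n+u), hGcf (n+v), hGcf (n+u+v), hGcf n,
    pow_add, pow_add, pow_add, pow_add, pow_add, pow_add,
    pow_add, pow_add, pow_add, pow_add, pow_add, pow_add]
  ring
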